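/- In the flower game with k petals, the strategy for Eve that returns to the heart the first time Adam chooses each petal, and stops the play (moving to the vertex colored with all colors but i) the second time Adam chooses petal i, is winning; it can be implemented with 2^k − 1 memory states by tracking the set of petals visited (dropping the full set). -/

import Mathlib

/-- An arena: a directed graph with every vertex having a successor,
and a partition of vertices between Eve (`eve v`) and Adam (`¬ eve v`). -/
structure Arena (V : Type) where
  E : V → V → Prop
  eve : V → Prop
  succ_exists : ∀ v, ∃ w, E v w

variable {V M : Type}

/-- A play from `v0`: an infinite path starting at `v0`. -/
def IsPlay (A : Arena V) (v0 : V) (π : ℕ → V) : Prop :=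
  π 0 = v0 ∧ ∀ n, A.E (π n) (π (n + 1))

/-- The finite history of a play up to time `n` (inclusive). -/
def hist (π : ℕ → V) (n : ℕ) : List V :=
  List.ofFn (fun i : Fin (n + 1) => π i)

/-- A strategy (a function from histories to vertices) is legal if it always moves along edges. -/
def Legal (A : Arena V) (σ : List V → V) : Prop :=
  ∀ (l : List V) (v : V), A.E v (σ (l ++ [v]))

/-- A play is consistent with Eve's strategy `σ`. -/
def ConsistentEve (A : Arena V) (σ : List V → V) (π : ℕ → V) : Prop :=
  ∀ n, A.eve (π n) → π (n + 1) = σ (hist π n)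

/-- A play is consistent with Adam's strategy `τ`. -/
def ConsistentAdam (A : Arena V) (τ : List V → V) (π : ℕ → V) : Prop :=
  ∀ n, ¬ A.eve (π n) → π (n + 1) = τ (hist π n)

/-- The generalized reachability objective: visit each `F i` at least once. -/
def GenReach {k : ℕ} (F : Fin k → Set V) (π : ℕ → V) : Prop :=
  ∀ i, ∃ n, π n ∈ F i

/-- Eve wins the generalized reachability game from `v0`. -/
def EveWinsGenReach {k : ℕ} (A : Arena V) (F : Fin k → Set V) (v0 : V) : Prop :=
  ∃ σ, Legal A σ ∧ ∀ π, IsPlay A v0 π → ConsistentEve A σ π → GenReach F π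

/-- Adam wins the generalized reachability game from `v0`. -/
def AdamWinsGenReach {k : ℕ} (A : Arena V) (F : Fin k → Set V) (v0 : V) : Prop :=
  ∃ τ, Legal A τ ∧ ∀ π, IsPlay A v0 π → ConsistentAdam A τ π → ¬ GenReach F π

/-- One step of the attractor computation. -/
def AttrStep (A : Arena V) (X : Set V) : Set V :=
  X ∪ {u | A.eve u ∧ ∃ v, A.E u v ∧ v ∈ X} ∪ {u | ¬ A.eve u ∧ ∀ v, A.E u v → v ∈ X}

/-- The attractor sequence `Attr_i(F)`. -/
def AttrSeq (A : Arena V) (F : Set V) : ℕ → Set V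
  | 0 => F
  | n + 1 => AttrStep A (AttrSeq A F n)

/-- The attractor `Attr(F)`: union of the attractor sequence. -/
def Attr (A : Arena V) (F : Set V) : Set V := ⋃ n, AttrSeq A F n

/-- A memory structure: initial memory state and update function on edges. -/
structure MemStruct (V M : Type) where
  m0 : M
  upd : M → V → V → M

/-- The sequence of memory states along a play. -/
def memTrace (μ : MemStruct V M) (π : ℕ → V) : ℕ → M
  | 0 => μ.m0
  | n + 1 => μ.upd (memTrace μ π n) (π n) (π (n + 1))

/-- A next-move function is legal if it always moves along edges. -/
def MemLegal (A : Arena V) (ν : V → M → V) : Prop :=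
  ∀ v m, A.E v (ν v m)

/-- Consistency of a play with Eve's finite-memory strategy `(μ, ν)`. -/
def MemConsistentEve (A : Arena V) (μ : MemStruct V M) (ν : V → M → V) (π : ℕ → V) : Prop :=
  ∀ n, A.eve (π n) → π (n + 1) = ν (π n) (memTrace μ π n)

/-- Consistency of a play with Adam's finite-memory strategy `(μ, ν)`. -/
def MemConsistentAdam (A : Arena V) (μ : MemStruct V M) (ν : V → M → V) (π : ℕ → V) : Prop :=
  ∀ n, ¬ A.eve (π n) → π (n + 1) = ν (π n) (memTrace μ π n)

/-- Eve wins with the finite-memory strategy `(μ, ν)` from `v0`. -/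
def EveWinsWithMem {k : ℕ} (A : Arena V) (F : Fin k → Set V) (v0 : V)
    (μ : MemStruct V M) (ν : V → M → V) : Prop :=
  MemLegal A ν ∧ ∀ π, IsPlay A v0 π → MemConsistentEve A μ ν π → GenReach F π

/-- Adam wins with the finite-memory strategy `(μ, ν)` from `v0`. -/
def AdamWinsWithMem {k : ℕ} (A : Arena V) (F : Fin k → Set V) (v0 : V)
    (μ : MemStruct V M) (ν : V → M → V) : Prop :=
  MemLegal A ν ∧ ∀ π, IsPlay A v0 π → MemConsistentAdam A μ ν π → ¬ GenReach F π


/-- The flower arena's vertices: the heart, the petals `v_i`, the return vertices `b_i`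
and the sinks `c_i`. -/
inductive Flower (k : ℕ)
  | heart
  | petal (i : Fin k)
  | back (i : Fin k)
  | sink (i : Fin k)
deriving DecidableEq

/-- Edges of the flower arena. -/
def flowerE {k : ℕ} : Flower k → Flower k → Prop
  | .heart, .petal _ => True
  | .petal i, .back j => i = j
  | .petal i, .sink j => i = j
  | .back _, .heart => True
  | .sink i, .sink j => i = j
  | _, _ => False

/-- The flower arena: Adam owns the heart, Eve owns the petals. -/
def flowerArena (k : ℕ) (hk : 0 < k) : Arena (Flower k) where
  E := flowerE
  eve := fun v => ∃ i, v = Flower.petal i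
  succ_exists := fun v => by
    cases v with
    | heart => exact ⟨Flower.petal ⟨0, hk⟩, trivial⟩
    | petal i => exact ⟨Flower.back i, rfl⟩
    | back i => exact ⟨Flower.heart, trivial⟩
    | sink i => exact ⟨Flower.sink i, rfl⟩

/-- The reachability sets of the flower game: `b_i` has color `i` only, and the sink
`c_j` has every color except `j`. -/
def flowerF (k : ℕ) : Fin k → Set (Flower k) :=
  fun i => {v | v = Flower.back i ∨ ∃ j, j ≠ i ∧ v = Flower.sink j}

/-- Memory states for Eve's strategy in the flower game: the proper subsets of petals
already chosen by Adam (the full set is dropped). -/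
abbrev FlowerMem (k : ℕ) := {S : Finset (Fin k) // S ≠ Finset.univ}

/-- The memory structure tracking (strictly) the set of petals chosen by Adam so far. -/
def flowerMu (k : ℕ) (hk : 0 < k) : MemStruct (Flower k) (FlowerMem k) where
  m0 := ⟨∅, by
    intro h
    have := Finset.mem_univ (⟨0, hk⟩ : Fin k)
    rw [← h] at this
    simp at this⟩
  upd := fun m v _ =>
    match v with
    | .petal i =>
        if h : insert i m.val = Finset.univ then m else ⟨insert i m.val, h⟩
    | _ => m

/-- Eve's strategy: the first time Adam chooses petal `i`, return to the heart via `b_i`;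
the second time, stop the play by moving to the sink `c_i`. -/
def flowerNu (k : ℕ) (hk : 0 < k) : Flower k → FlowerMem k → Flower k :=
  fun v m =>
    match v with
    | .petal i => if i ∈ m.val then Flower.sink i else Flower.back i
    | .heart => Flower.petal ⟨0, hk⟩
    | .back _ => Flower.heart
    | .sink i => Flower.sink i


section FlowerAux

variable {k : ℕ}

private lemma fE_heart {w : Flower k} (h : flowerE Flower.heart w) :
    ∃ i, w = Flower.petal i := by
  cases w with
  | heart => exact h.elim
  | petal i => exact ⟨i, rfl⟩
  | back i => exact h.elim
  | sink i => exact h.elim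

private lemma fE_petal {i : Fin k} {w : Flower k} (h : flowerE (Flower.petal i) w) :
    w = Flower.back i ∨ w = Flower.sink i := by
  cases w with
  | heart => exact h.elim
  | petal j => exact h.elim
  | back j => exact Or.inl (by rw [h])
  | sink j => exact Or.inr (by rw [h])

private lemma fE_back {i : Fin k} {w : Flower k} (h : flowerE (Flower.back i) w) :
    w = Flower.heart := by
  cases w with
  | heart => rfl
  | petal j => exact h.elim
  | back j => exact h.elim
  | sink j => exact h.elim

private lemma flower_win (k : ℕ) (hk : 0 < k) (π : ℕ → Flower k)
    (hp : IsPlay (flowerArena k hk) Flower.heart π)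
    (hc : MemConsistentEve (flowerArena k hk) (flowerMu k hk) (flowerNu k hk) π) :
    GenReach (flowerF k) π := by
  classical
  set μ := flowerMu k hk with hμdef
  set m : ℕ → Finset (Fin k) := fun n => (memTrace μ π n).1 with hmdef
  have hedge : ∀ n, flowerE (π n) (π (n + 1)) := hp.2
  -- step lemma at petals
  have step_petal : ∀ n i, π n = Flower.petal i →
      π (n + 1) = if i ∈ m n then Flower.sink i else Flower.back i := by
    intro n i h
    have he : (flowerArena k hk).eve (π n) := ⟨i, h⟩
    have hcn := hc n he
    rw [h] at hcn
    exact hcn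
  -- memory after a petal step
  have mem_petal : ∀ n i, π n = Flower.petal i →
      m (n + 1) = if insert i (m n) = Finset.univ then m n else insert i (m n) := by
    intro n i h
    have hupd : memTrace μ π (n + 1)
        = if hh : insert i (m n) = Finset.univ then memTrace μ π n
          else ⟨insert i (m n), hh⟩ := by
      show μ.upd (memTrace μ π n) (π n) (π (n + 1)) = _
      rw [h]
      rfl
    by_cases hins : insert i (m n) = Finset.univ
    · rw [if_pos hins]
      show (memTrace μ π (n + 1)).1 = _
      rw [hupd, dif_pos hins]
    · rw [if_neg hins]
      show (memTrace μ π (n + 1)).1 = _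
      rw [hupd, dif_neg hins]
  have mem_other : ∀ n, (∀ i, π n ≠ Flower.petal i) → m (n + 1) = m n := by
    intro n h
    show (μ.upd (memTrace μ π n) (π n) (π (n + 1))).1 = _
    cases hn : π n with
    | petal i => exact absurd hn (h i)
    | heart => rfl
    | back i => rfl
    | sink i => rfl
  have mono_step : ∀ n, m n ⊆ m (n + 1) := by
    intro n
    cases hn : π n with
    | petal i =>
        rw [mem_petal n i hn]
        split_ifs with hins
        · exact Finset.Subset.refl _
        · exact Finset.subset_insert _ _
    | heart => rw [mem_other n (by simp [hn])]
    | back i => rw [mem_other n (by simp [hn])]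
    | sink i => rw [mem_other n (by simp [hn])]
  have mono : ∀ a b, a ≤ b → m a ⊆ m b := by
    intro a b hab
    induction b with
    | zero => rw [Nat.le_zero.mp hab]
    | succ b ih =>
        rcases Nat.lt_or_ge a (b + 1) with h | h
        · exact (ih (Nat.lt_succ_iff.mp h)).trans (mono_step b)
        · rw [Nat.le_antisymm hab h]
  -- invariant: every petal recorded in memory has had its back vertex visited
  have inv : ∀ n j, j ∈ m n → ∃ t ≤ n, π t = Flower.back j := by
    intro n
    induction n with
    | zero =>
        intro j hj
        exact absurd hj (by simp [hmdef, hμdef, memTrace, flowerMu])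
    | succ n ih =>
        intro j hj
        cases hn : π n with
        | heart =>
            rw [mem_other n (by simp [hn])] at hj
            obtain ⟨t, ht, h⟩ := ih j hj
            exact ⟨t, ht.trans (Nat.le_succ n), h⟩
        | back i =>
            rw [mem_other n (by simp [hn])] at hj
            obtain ⟨t, ht, h⟩ := ih j hj
            exact ⟨t, ht.trans (Nat.le_succ n), h⟩
        | sink i =>
            rw [mem_other n (by simp [hn])] at hj
            obtain ⟨t, ht, h⟩ := ih j hj
            exact ⟨t, ht.trans (Nat.le_succ n), h⟩
        | petal i =>
            rw [mem_petal n i hn] at hj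
            by_cases hins : insert i (m n) = Finset.univ
            · rw [if_pos hins] at hj
              obtain ⟨t, ht, h⟩ := ih j hj
              exact ⟨t, ht.trans (Nat.le_succ n), h⟩
            · rw [if_neg hins] at hj
              rcases Finset.mem_insert.mp hj with rfl | hjm
              · by_cases hi : j ∈ m n
                · obtain ⟨t, ht, h⟩ := ih j hi
                  exact ⟨t, ht.trans (Nat.le_succ n), h⟩
                · refine ⟨n + 1, le_refl _, ?_⟩
                  rw [step_petal n j hn, if_neg hi]
              · obtain ⟨t, ht, h⟩ := ih j hjm
                exact ⟨t, ht.trans (Nat.le_succ n), h⟩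
  by_cases hs : ∃ n i, π n = Flower.sink i
  · -- a sink is reached
    have hsP : ∃ n, ∃ i, π n = Flower.sink i := hs
    obtain ⟨s, hsink⟩ := Nat.find_spec hsP
    have hn0pos : Nat.find hsP ≠ 0 := by
      intro h0
      rw [h0, hp.1] at hsink
      cases hsink
    obtain ⟨t, ht⟩ := Nat.exists_eq_succ_of_ne_zero hn0pos
    rw [ht] at hsink
    have hedge_t := hedge t
    rw [hsink] at hedge_t
    have hback : ∃ u, π u = Flower.back s := by
      cases ht' : π t with
      | heart => rw [ht'] at hedge_t; exact hedge_t.elim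
      | back j => rw [ht'] at hedge_t; exact hedge_t.elim
      | sink j =>
          exact absurd ⟨j, ht'⟩ (Nat.find_min hsP (by rw [ht]; exact Nat.lt_succ_self t))
      | petal j =>
          have hstep := step_petal t j ht'
          rw [hsink] at hstep
          by_cases hj : j ∈ m t
          · rw [if_pos hj] at hstep
            have hsj : s = j := by injection hstep
            obtain ⟨u, _, hu⟩ := inv t j hj
            exact ⟨u, by rw [hu, hsj]⟩
          · rw [if_neg hj] at hstep
            cases hstep
    obtain ⟨u, hu⟩ := hback
    intro j
    by_cases hjs : j = s
    · exact ⟨u, Or.inl (by rw [hu, hjs])⟩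
    · exact ⟨t + 1, Or.inr ⟨s, fun h => hjs h.symm, hsink⟩⟩
  · -- no sink is ever reached
    push_neg at hs
    have hpet_notmem : ∀ n i, π n = Flower.petal i → i ∉ m n := by
      intro n i h hmem
      have := step_petal n i h
      rw [if_pos hmem] at this
      exact hs (n + 1) i this
    have hstep3 : ∀ n, π n = Flower.heart →
        π (n + 3) = Flower.heart ∧ ∃ i, π (n + 1) = Flower.petal i ∧
          π (n + 2) = Flower.back i := by
      intro n hn
      have h1 := hedge n
      rw [hn] at h1
      obtain ⟨i, hi⟩ := fE_heart h1
      have h2 := step_petal (n + 1) i hi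
      rw [if_neg (hpet_notmem (n + 1) i hi)] at h2
      have h3 := hedge (n + 2)
      rw [h2] at h3
      exact ⟨fE_back h3, i, hi, h2⟩
    have key : ∀ n, π (3 * n) = Flower.heart := by
      intro n
      induction n with
      | zero => exact hp.1
      | succ n ih =>
          have := (hstep3 (3 * n) ih).1
          rw [show 3 * (n + 1) = 3 * n + 3 by ring]
          exact this
    -- cardinality argument: find a petal step where memory would become full
    set c : ℕ → ℕ := fun n => (m n).card with hcdef
    have hbd : ∀ n, c n ≤ k := fun n => by
      simpa using Finset.card_le_card (Finset.subset_univ (m n))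
    have hbdd : BddAbove (Set.range c) := ⟨k, by rintro x ⟨n, rfl⟩; exact hbd n⟩
    have hSmem := Nat.sSup_mem (Set.range_nonempty c) hbdd
    obtain ⟨n0, hn0⟩ := hSmem
    obtain ⟨i, hi, hbi⟩ := (hstep3 (3 * n0) (key n0)).2
    set t := 3 * n0 + 1 with htdef
    have hnotmem : i ∉ m t := hpet_notmem t i hi
    have hins : insert i (m t) = Finset.univ := by
      by_contra hins
      have hmt1 : m (t + 1) = insert i (m t) := by
        rw [mem_petal t i hi, if_neg hins]
      have h1 : c (t + 1) = c t + 1 := by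
        simp only [hcdef]
        rw [hmt1, Finset.card_insert_of_notMem hnotmem]
      have h2 : c (t + 1) ≤ c n0 := by
        rw [hn0]
        exact le_csSup hbdd ⟨t + 1, rfl⟩
      have h3 : c n0 ≤ c t := by
        exact Finset.card_le_card (mono n0 t (by omega))
      omega
    intro j
    by_cases hji : j = i
    · refine ⟨t + 1, Or.inl ?_⟩
      rw [step_petal t i hi, if_neg hnotmem, hji]
    · have hjm : j ∈ m t := by
        have : j ∈ insert i (m t) := by rw [hins]; exact Finset.mem_univ j
        rcases Finset.mem_insert.mp this with rfl | h
        · exact absurd rfl hji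
        · exact h
      obtain ⟨u, _, hu⟩ := inv t j hjm
      exact ⟨u, Or.inl hu⟩

end FlowerAux

/-- in the flower game with `k` petals, the "return the first time, stop
the second time" strategy is winning for Eve, and it uses `2^k - 1` memory states. -/
theorem flower_strategy_winning (k : ℕ) (hk : 0 < k) :
    EveWinsWithMem (flowerArena k hk) (flowerF k) Flower.heart (flowerMu k hk) (flowerNu k hk) ∧
    Fintype.card (FlowerMem k) = 2 ^ k - 1 := by
  constructor
  · constructor
    · intro v mem
      cases v with
      | heart => exact trivial
      | petal i =>
          show flowerE (Flower.petal i) (flowerNu k hk (Flower.petal i) mem)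
          simp only [flowerNu]
          split_ifs <;> rfl
      | back i => exact trivial
      | sink i => rfl
    · exact fun π hplay hcons => flower_win k hk π hplay hcons
  · have h := Fintype.card_subtype_compl (fun S : Finset (Fin k) => S = Finset.univ)
    rw [Fintype.card_subtype_eq, Fintype.card_finset, Fintype.card_fin] at h
    exact h
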